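/- arXiv:0710.1849 — 3 statements merged into one kernel-verified Lean document; each statement's English description precedes it below -/
import Mathlib

section
/- Define f(s) = ‖σ(s)‖². Then f is twice differentiable and for every s ∈ [0, L] its second derivative satisfies f''(s) ≥ 2 − β²·s². (Intermediate estimate in the proof of Lemma 3.4, using f''(s) = 2 + 2⟨σ''(s), σ(s) − s σ'(s)⟩ and the bound ‖σ(s) − sσ'(s)‖ ≤ βs²/2.) -/
open Set
open scoped RealInnerProductSpace

/-- Intermediate estimate in the proof of Lemma 3.4: with `f s = ‖σ s‖²`,
the function `f` is twice differentiable and `f'' s ≥ 2 - β² s²` on `[0, L]`. -/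
theorem stmt_1 (N : ℕ) (hN : 0 < N) (L β : ℝ) (hL : 0 < L) (hβ : 0 ≤ β)
    (σ : ℝ → EuclideanSpace ℝ (Fin N))
    (hσ : ContDiff ℝ 2 σ) (hσ0 : σ 0 = 0)
    (hunit : ∀ s ∈ Set.Icc 0 L, ‖deriv σ s‖ = 1)
    (hcurv : ∀ s ∈ Set.Icc 0 L, ‖deriv (deriv σ) s‖ ≤ β)
    (f : ℝ → ℝ) (hf : f = fun s => ‖σ s‖ ^ 2) :
    Differentiable ℝ f ∧ Differentiable ℝ (deriv f) ∧
      ∀ s ∈ Set.Icc 0 L, 2 - β ^ 2 * s ^ 2 ≤ deriv (deriv f) s := by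
  have hσd : Differentiable ℝ σ := hσ.differentiable (by norm_num)
  have hσ1 : ContDiff ℝ 1 (deriv σ) := by
    have h := (contDiff_succ_iff_deriv (n := 1)).mp (by exact_mod_cast hσ)
    exact h.2.2
  have hσ'd : Differentiable ℝ (deriv σ) := hσ1.differentiable (by norm_num)
  have hσ''c : Continuous (deriv (deriv σ)) := (contDiff_one_iff_deriv.mp hσ1).2
  -- first derivative
  have hd1 : ∀ s, HasDerivAt f (2 * ⟪deriv σ s, σ s⟫) s := by
    intro s
    have h := ((hσd s).hasDerivAt.inner ℝ (hσd s).hasDerivAt)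
    have hfe : f = fun t => ⟪σ t, σ t⟫ := by
      funext t; rw [hf]; rw [real_inner_self_eq_norm_sq]
    rw [hfe]
    refine h.congr_deriv ?_
    rw [real_inner_comm]; ring
  have hdf : deriv f = fun s => 2 * ⟪deriv σ s, σ s⟫ := by
    funext s; exact (hd1 s).deriv
  have hd2 : ∀ s, HasDerivAt (deriv f)
      (2 * (⟪deriv (deriv σ) s, σ s⟫ + ⟪deriv σ s, deriv σ s⟫)) s := by
    intro s
    rw [hdf]
    have h := ((hσ'd s).hasDerivAt.inner ℝ (hσd s).hasDerivAt).const_mul 2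
    refine h.congr_deriv ?_
    ring
  refine ⟨fun s => (hd1 s).differentiableAt, fun s => (hd2 s).differentiableAt, ?_⟩
  intro s hs
  rw [(hd2 s).deriv]
  -- ⟪σ'' t, σ' t⟫ = 0 on [0, L]
  have horth : ∀ t ∈ Icc 0 L, ⟪deriv (deriv σ) t, deriv σ t⟫ = 0 := by
    have hcont : Continuous fun t => ⟪deriv (deriv σ) t, deriv σ t⟫ :=
      hσ''c.inner hσ'd.continuous
    have hIoo : ∀ t ∈ Ioo 0 L, ⟪deriv (deriv σ) t, deriv σ t⟫ = 0 := by
      intro t ht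
      have hD : HasDerivAt (fun u => ⟪deriv σ u, deriv σ u⟫)
          (⟪deriv σ t, deriv (deriv σ) t⟫ + ⟪deriv (deriv σ) t, deriv σ t⟫) t :=
        (hσ'd t).hasDerivAt.inner ℝ (hσ'd t).hasDerivAt
      have hev : (fun u => ⟪deriv σ u, deriv σ u⟫) =ᶠ[nhds t] fun _ => (1 : ℝ) := by
        filter_upwards [Icc_mem_nhds ht.1 ht.2] with u hu
        rw [real_inner_self_eq_norm_sq, hunit u hu]; norm_num
      have h0 : HasDerivAt (fun _ : ℝ => (1 : ℝ))
          (⟪deriv σ t, deriv (deriv σ) t⟫ + ⟪deriv (deriv σ) t, deriv σ t⟫) t :=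
        hD.congr_of_eventuallyEq hev.symm
      have := h0.deriv
      rw [deriv_const] at this
      have hc := real_inner_comm (deriv σ t) (deriv (deriv σ) t)
      linarith
    have heq : EqOn (fun t => ⟪deriv (deriv σ) t, deriv σ t⟫) (fun _ => (0:ℝ)) (Ioo 0 L) :=
      fun t ht => hIoo t ht
    have hcl := heq.closure hcont continuous_const
    intro t ht
    have := hcl (by rw [closure_Ioo hL.ne]; exact ht)
    exact this
  -- the key norm bound: ‖σ s - s • deriv σ s‖ ≤ β * s ^ 2 / 2
  have hkey : ‖σ s - s • deriv σ s‖ ≤ β * s ^ 2 / 2 := by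
    set v := deriv σ s with hv
    have hg' : ∀ t, HasDerivAt (fun u => σ u - u • v) (deriv σ t - v) t := by
      intro t
      have := (hσd t).hasDerivAt.sub ((hasDerivAt_id t).smul_const v)
      simp only [one_smul] at this
      exact this
    have hbound : ∀ t ∈ Ico 0 s, ‖deriv σ t - v‖ ≤ β * (s - t) := by
      intro t ht
      have hts : t ≤ s := le_of_lt ht.2
      have hsub : Icc t s ⊆ Icc 0 L := Icc_subset_Icc ht.1 hs.2
      have := (convex_Icc t s).norm_image_sub_le_of_norm_hasDerivWithin_le
        (f := deriv σ) (f' := deriv (deriv σ)) (C := β)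
        (fun u hu => ((hσ'd u).hasDerivAt).hasDerivWithinAt)
        (fun u hu => hcurv u (hsub hu)) (left_mem_Icc.mpr hts) (right_mem_Icc.mpr hts)
      calc ‖deriv σ t - v‖ = ‖deriv σ s - deriv σ t‖ := by rw [hv, norm_sub_rev]
        _ ≤ β * ‖s - t‖ := this
        _ = β * (s - t) := by rw [Real.norm_eq_abs, abs_of_nonneg (by linarith)]
    have hmain := image_norm_le_of_norm_deriv_right_le_deriv_boundary
      (f := fun u => σ u - u • v) (f' := fun t => deriv σ t - v) (a := 0) (b := s)
      (B := fun t => β * (s * t - t ^ 2 / 2)) (B' := fun t => β * (s - t))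
      ((hσd.continuous.sub (continuous_id.smul continuous_const)).continuousOn)
      (fun t _ => (hg' t).hasDerivWithinAt)
      (by simp [hσ0])
      (fun t => by
        have : HasDerivAt (fun u : ℝ => β * (s * u - u ^ 2 / 2)) (β * (s - t)) t := by
          have h1 : HasDerivAt (fun u : ℝ => s * u - u ^ 2 / 2) (s - t) t := by
            have := ((hasDerivAt_id t).const_mul s).sub
              (((hasDerivAt_pow 2 t)).div_const 2)
            exact this.congr_deriv (by push_cast; ring)
          simpa using h1.const_mul β
        exact this)
      hbound (right_mem_Icc.mpr hs.1)
    calc ‖σ s - s • v‖ ≤ β * (s * s - s ^ 2 / 2) := by simpa using hmain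
      _ = β * s ^ 2 / 2 := by ring
  -- conclude
  have h1 : ⟪deriv σ s, deriv σ s⟫ = 1 := by
    rw [real_inner_self_eq_norm_sq, hunit s hs]; norm_num
  have h2 : ⟪deriv (deriv σ) s, σ s⟫ = ⟪deriv (deriv σ) s, σ s - s • deriv σ s⟫ := by
    rw [inner_sub_right, inner_smul_right, horth s hs]; ring
  have h3 : -(β ^ 2 * s ^ 2 / 2) ≤ ⟪deriv (deriv σ) s, σ s - s • deriv σ s⟫ := by
    have := abs_real_inner_le_norm (deriv (deriv σ) s) (σ s - s • deriv σ s)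
    have hb := mul_le_mul (hcurv s hs) hkey (norm_nonneg _) hβ
    have habs : |⟪deriv (deriv σ) s, σ s - s • deriv σ s⟫| ≤ β ^ 2 * s ^ 2 / 2 := by
      calc |⟪deriv (deriv σ) s, σ s - s • deriv σ s⟫| ≤ _ := this
        _ ≤ β * (β * s ^ 2 / 2) := hb
        _ = β ^ 2 * s ^ 2 / 2 := by ring
    linarith [neg_abs_le ⟪deriv (deriv σ) s, σ s - s • deriv σ s⟫, habs]
  rw [h1, h2]
  nlinarith [h3]
end

section
/- For every s ∈ [0, L] one has ‖σ(s)‖² ≥ s² − (β²/12)·s⁴. In particular, the extrinsic (Euclidean) distance from σ(0) to σ(s) is bounded below in terms of the arc length s and the curvature bound β. -/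
open Set
open scoped RealInnerProductSpace

/-- Lemma 3.4, lower bound on the extrinsic distance: `‖σ s‖² ≥ s² - (β²/12) s⁴`
for a unit-speed `C²` curve `σ` with `σ 0 = 0` and `‖σ''‖ ≤ β` on `[0, L]`. -/
theorem stmt_3 (N : ℕ) (hN : 0 < N) (L β : ℝ) (hL : 0 < L) (hβ : 0 ≤ β)
    (σ : ℝ → EuclideanSpace ℝ (Fin N))
    (hσ : ContDiff ℝ 2 σ) (hσ0 : σ 0 = 0)
    (hunit : ∀ s ∈ Set.Icc 0 L, ‖deriv σ s‖ = 1)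
    (hcurv : ∀ s ∈ Set.Icc 0 L, ‖deriv (deriv σ) s‖ ≤ β) :
    ∀ s ∈ Set.Icc 0 L, s ^ 2 - β ^ 2 / 12 * s ^ 4 ≤ ‖σ s‖ ^ 2 := by
  have hd1 : Differentiable ℝ σ := hσ.differentiable (by norm_num)
  have hc1 : ContDiff ℝ 1 (deriv σ) := by
    have : (2 : WithTop ℕ∞) = 1 + 1 := by norm_num
    exact ((contDiff_succ_iff_deriv).mp (this ▸ hσ)).2.2
  have hd2 : Differentiable ℝ (deriv σ) := hc1.differentiable (by norm_num)
  -- Lipschitz bound on deriv σ over [0, L]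
  have hLip : ∀ s ∈ Icc (0:ℝ) L, ∀ t ∈ Icc (0:ℝ) L,
      ‖deriv σ t - deriv σ s‖ ≤ β * ‖t - s‖ := by
    intro s hs t ht
    exact (convex_Icc 0 L).norm_image_sub_le_of_norm_deriv_le
      (fun x _ => hd2 x) (fun x hx => hcurv x hx) hs ht
  -- orthogonality: ⟪σ' s, σ'' s⟫ = 0 on [0, L]
  have horth : ∀ s ∈ Icc (0:ℝ) L, ⟪deriv σ s, deriv (deriv σ) s⟫ = 0 := by
    intro s hs
    have hq : ∀ x : ℝ, HasDerivAt (fun t => ⟪deriv σ t, deriv σ t⟫)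
        (⟪deriv σ x, deriv (deriv σ) x⟫ + ⟪deriv (deriv σ) x, deriv σ x⟫) x :=
      fun x => (hd2 x).hasDerivAt.inner ℝ (hd2 x).hasDerivAt
    have hu : UniqueDiffWithinAt ℝ (Icc (0:ℝ) L) s :=
      (uniqueDiffOn_Icc hL) s hs
    have h1 : derivWithin (fun t => ⟪deriv σ t, deriv σ t⟫) (Icc (0:ℝ) L) s
        = ⟪deriv σ s, deriv (deriv σ) s⟫ + ⟪deriv (deriv σ) s, deriv σ s⟫ :=
      ((hq s).hasDerivWithinAt).derivWithin hu
    have h2 : derivWithin (fun t => ⟪deriv σ t, deriv σ t⟫) (Icc (0:ℝ) L) s = 0 := by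
      rw [derivWithin_congr (f := fun _ => (1:ℝ))
        (fun t ht => by rw [real_inner_self_eq_norm_sq, hunit t ht]; norm_num)
        (by rw [real_inner_self_eq_norm_sq, hunit s hs]; norm_num)]
      exact congrFun (derivWithin_fun_const (Icc (0:ℝ) L) (1:ℝ)) s
    rw [h1] at h2
    rw [real_inner_comm] at h2 ⊢
    linarith [h2]
  -- key pointwise bound: ⟪σ' t, σ'' s⟫ ≥ -β² |t - s|
  have hkey : ∀ s ∈ Icc (0:ℝ) L, ∀ t ∈ Icc (0:ℝ) L,
      -(β ^ 2 * |t - s|) ≤ ⟪deriv σ t, deriv (deriv σ) s⟫ := by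
    intro s hs t ht
    have h1 : ⟪deriv σ t, deriv (deriv σ) s⟫
        = ⟪deriv σ t - deriv σ s, deriv (deriv σ) s⟫ := by
      rw [inner_sub_left, horth s hs]; ring
    rw [h1]
    have h2 := real_inner_le_norm (deriv σ s - deriv σ t) (deriv (deriv σ) s)
    have h3 : ‖deriv σ s - deriv σ t‖ ≤ β * ‖s - t‖ := hLip t ht s hs
    have h4 : ‖deriv (deriv σ) s‖ ≤ β := hcurv s hs
    have h5 : ⟪deriv σ s - deriv σ t, deriv (deriv σ) s⟫ ≤ β * ‖s - t‖ * β := by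
      calc ⟪deriv σ s - deriv σ t, deriv (deriv σ) s⟫
          ≤ ‖deriv σ s - deriv σ t‖ * ‖deriv (deriv σ) s‖ := h2
        _ ≤ β * ‖s - t‖ * β := by
            apply mul_le_mul h3 h4 (norm_nonneg _)
            positivity
    have h6 : ⟪deriv σ t - deriv σ s, deriv (deriv σ) s⟫
        = -⟪deriv σ s - deriv σ t, deriv (deriv σ) s⟫ := by
      rw [← inner_neg_left]; congr 1; abel
    rw [h6]
    have : ‖s - t‖ = |t - s| := by rw [Real.norm_eq_abs, abs_sub_comm]
    nlinarith [h5, abs_nonneg (t - s)]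
  -- second key bound: ⟪σ s, σ'' s⟫ ≥ -β² s² / 2
  have hsec : ∀ s ∈ Icc (0:ℝ) L, -(β ^ 2 * s ^ 2 / 2) ≤ ⟪σ s, deriv (deriv σ) s⟫ := by
    intro s hs
    obtain ⟨hs0, hsL⟩ := hs
    set v := deriv (deriv σ) s with hv
    -- ψ t = ⟪σ t, v⟫ + β² s t - β² t² / 2, monotone on [0, s]
    set ψ : ℝ → ℝ := fun t => ⟪σ t, v⟫ + β ^ 2 * s * t - β ^ 2 * t ^ 2 / 2 with hψ
    have hψd : ∀ t : ℝ, HasDerivAt ψ (⟪deriv σ t, v⟫ + β ^ 2 * s - β ^ 2 * t) t := by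
      intro t
      have h1 : HasDerivAt (fun t => ⟪σ t, v⟫) (⟪σ t, 0⟫ + ⟪deriv σ t, v⟫) t :=
        (hd1 t).hasDerivAt.inner ℝ (hasDerivAt_const t v)
      simp only [inner_zero_right, zero_add] at h1
      have h2 : HasDerivAt (fun t => β ^ 2 * s * t) (β ^ 2 * s) t := by
        simpa using (hasDerivAt_id t).const_mul (β ^ 2 * s)
      have h3 : HasDerivAt (fun t : ℝ => β ^ 2 * t ^ 2 / 2) (β ^ 2 * t) t := by
        have := ((hasDerivAt_pow 2 t).const_mul (β ^ 2)).div_const 2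
        simpa using this.congr_deriv (by ring)
      exact (h1.add h2).sub h3
    have hmono : MonotoneOn ψ (Icc 0 s) := by
      apply monotoneOn_of_deriv_nonneg (convex_Icc 0 s)
      · exact (Continuous.continuousOn (by
          have : Continuous ψ := by
            apply Continuous.sub
            apply Continuous.add
            · exact (continuous_inner.comp (hd1.continuous.prodMk continuous_const))
            · exact continuous_const.mul continuous_id
            · exact (continuous_const.mul (continuous_pow 2)).div_const 2
          exact this))
      · intro x _
        exact ((hψd x).differentiableAt).differentiableWithinAt
      · intro x hx
        rw [interior_Icc] at hx
        have hxI : x ∈ Icc (0:ℝ) L := ⟨le_of_lt hx.1, le_trans (le_of_lt hx.2) hsL⟩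
        rw [(hψd x).deriv]
        have := hkey s ⟨hs0, hsL⟩ x hxI
        have habs : |x - s| = s - x := by
          rw [abs_sub_comm, abs_of_nonneg]; linarith [hx.2]
        rw [habs] at this
        nlinarith
    have h0 : ψ 0 = 0 := by simp [hψ, hσ0]
    have hss : ψ 0 ≤ ψ s := hmono ⟨le_refl 0, hs0⟩ ⟨hs0, le_refl s⟩ hs0
    rw [h0] at hss
    simp only [hψ] at hss
    nlinarith
  -- third: ⟪σ s, σ' s⟫ ≥ s - β² s³ / 6 on [0, L]
  have hthird : ∀ s ∈ Icc (0:ℝ) L, s - β ^ 2 * s ^ 3 / 6 ≤ ⟪σ s, deriv σ s⟫ := by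
    set g : ℝ → ℝ := fun t => ⟪σ t, deriv σ t⟫ - t + β ^ 2 * t ^ 3 / 6 with hg
    have hgd : ∀ t : ℝ, HasDerivAt g
        (⟪σ t, deriv (deriv σ) t⟫ + ⟪deriv σ t, deriv σ t⟫ - 1 + β ^ 2 * t ^ 2 / 2) t := by
      intro t
      have h1 : HasDerivAt (fun t => ⟪σ t, deriv σ t⟫)
          (⟪σ t, deriv (deriv σ) t⟫ + ⟪deriv σ t, deriv σ t⟫) t :=
        (hd1 t).hasDerivAt.inner ℝ (hd2 t).hasDerivAt
      have h3 : HasDerivAt (fun t : ℝ => β ^ 2 * t ^ 3 / 6) (β ^ 2 * t ^ 2 / 2) t := by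
        have := ((hasDerivAt_pow 3 t).const_mul (β ^ 2)).div_const 6
        simpa using this.congr_deriv (by ring)
      exact ((h1.sub (hasDerivAt_id t)).add h3)
    have hmono : MonotoneOn g (Icc 0 L) := by
      apply monotoneOn_of_deriv_nonneg (convex_Icc 0 L)
      · exact fun x _ => ((hgd x).differentiableAt).continuousAt.continuousWithinAt
      · exact fun x _ => ((hgd x).differentiableAt).differentiableWithinAt
      · intro x hx
        rw [interior_Icc] at hx
        have hxI : x ∈ Icc (0:ℝ) L := ⟨le_of_lt hx.1, le_of_lt hx.2⟩
        rw [(hgd x).deriv]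
        have h1 := hsec x hxI
        have h2 : ⟪deriv σ x, deriv σ x⟫ = 1 := by
          rw [real_inner_self_eq_norm_sq, hunit x hxI]; norm_num
        rw [h2]; linarith
    intro s hs
    have h0 : g 0 = 0 := by simp [hg, hσ0]
    have := hmono (left_mem_Icc.mpr (le_trans hs.1 hs.2)) hs hs.1
    rw [h0] at this
    simp only [hg] at this
    linarith
  -- final: h t = ‖σ t‖² - t² + β² t⁴/12 is monotone
  intro s hs
  set h : ℝ → ℝ := fun t => ⟪σ t, σ t⟫ - t ^ 2 + β ^ 2 * t ^ 4 / 12 with hh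
  have hhd : ∀ t : ℝ, HasDerivAt h
      (2 * ⟪σ t, deriv σ t⟫ - 2 * t + β ^ 2 * t ^ 3 / 3) t := by
    intro t
    have h1 : HasDerivAt (fun t => ⟪σ t, σ t⟫)
        (⟪σ t, deriv σ t⟫ + ⟪deriv σ t, σ t⟫) t :=
      (hd1 t).hasDerivAt.inner ℝ (hd1 t).hasDerivAt
    rw [real_inner_comm (σ t) (deriv σ t)] at h1
    have h2 : HasDerivAt (fun t : ℝ => t ^ 2) (2 * t) t := by
      simpa using hasDerivAt_pow 2 t
    have h3 : HasDerivAt (fun t : ℝ => β ^ 2 * t ^ 4 / 12) (β ^ 2 * t ^ 3 / 3) t := by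
      have := ((hasDerivAt_pow 4 t).const_mul (β ^ 2)).div_const 12
      simpa using this.congr_deriv (by ring)
    have := (h1.sub h2).add h3
    exact this.congr_deriv (by ring)
  have hmono : MonotoneOn h (Icc 0 L) := by
    apply monotoneOn_of_deriv_nonneg (convex_Icc 0 L)
    · exact fun x _ => ((hhd x).differentiableAt).continuousAt.continuousWithinAt
    · exact fun x _ => ((hhd x).differentiableAt).differentiableWithinAt
    · intro x hx
      rw [interior_Icc] at hx
      have hxI : x ∈ Icc (0:ℝ) L := ⟨le_of_lt hx.1, le_of_lt hx.2⟩
      rw [(hhd x).deriv]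
      have := hthird x hxI
      linarith
  have h0 : h 0 = 0 := by simp [hh, hσ0]
  have hfin := hmono (left_mem_Icc.mpr (le_trans hs.1 hs.2)) hs hs.1
  rw [h0] at hfin
  simp only [hh, real_inner_self_eq_norm_sq] at hfin
  linarith
end

section
/- (Lemma 3.4, comparison of intrinsic and extrinsic distance.) Set R = ‖σ(L)‖ (the Euclidean distance between the endpoints of the curve) and assume in addition that β·L ≤ 1. Then the arc length L satisfies L ≤ R·(1 + (β²/12)·R²). In other words, on a submanifold of ℝ^N with second fundamental form bounded by β, the geodesic distance R̃ between two points and their Euclidean distance R satisfy R̃ ≤ R(1 + δR²) with δ = β²/12 depending only on β, provided βR̃ ≤ 1. -/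
open intervalIntegral Set

private lemma stmt_4_alg (L β R : ℝ) (hL : 0 < L) (hβ : 0 ≤ β) (hβL : β * L ≤ 1)
    (hRL : R ≤ L) (hR0 : 0 ≤ R) (hG : L ^ 2 - β ^ 2 * L ^ 4 / 12 ≤ R ^ 2) :
    L ≤ R * (1 + β ^ 2 / 12 * R ^ 2) := by
  have h1 : β ^ 2 * L ^ 2 ≤ 1 := by nlinarith [mul_nonneg hβ hL.le]
  have h2 : 11 / 12 * L ^ 2 ≤ R ^ 2 := by nlinarith
  have hRpos : 0 < R := by nlinarith
  have h3 : L ^ 4 ≤ R ^ 3 * L + R ^ 4 := by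
    nlinarith [pow_le_pow_left₀ hR0 hRL 2, mul_pos hRpos hRpos, mul_pos hL hL,
      sq_nonneg (L - R), mul_nonneg (mul_nonneg hR0 hR0) hR0]
  have h4 : 12 * (L - R) * (L + R) ≤ β ^ 2 * L ^ 4 := by nlinarith
  have h5 : β ^ 2 * L ^ 4 ≤ β ^ 2 * R ^ 3 * (L + R) := by nlinarith [sq_nonneg β]
  have hLR : 0 < L + R := by linarith
  nlinarith [mul_pos hLR hLR]

/-- Lemma 3.4 (comparison of intrinsic and extrinsic distance): if `R = ‖σ L‖` is the
Euclidean distance between the endpoints of a unit-speed `C²` curve `σ` of length `L`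
with `‖σ''‖ ≤ β` and `β L ≤ 1`, then `L ≤ R (1 + (β²/12) R²)`. -/
theorem stmt_4 (N : ℕ) (hN : 0 < N) (L β : ℝ) (hL : 0 < L) (hβ : 0 ≤ β)
    (σ : ℝ → EuclideanSpace ℝ (Fin N))
    (hσ : ContDiff ℝ 2 σ) (hσ0 : σ 0 = 0)
    (hunit : ∀ s ∈ Set.Icc 0 L, ‖deriv σ s‖ = 1)
    (hcurv : ∀ s ∈ Set.Icc 0 L, ‖deriv (deriv σ) s‖ ≤ β)
    (hβL : β * L ≤ 1) (R : ℝ) (hR : R = ‖σ L‖) :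
    L ≤ R * (1 + β ^ 2 / 12 * R ^ 2) := by
  set f := deriv σ with hf
  have hσd : Differentiable ℝ σ := hσ.differentiable two_ne_zero
  have hcd1 : ContDiff ℝ 1 f := by
    have h11 : (2 : WithTop ℕ∞) = 1 + 1 := by norm_num
    rw [h11] at hσ
    exact (contDiff_succ_iff_deriv.mp hσ).2.2
  have hfd : Differentiable ℝ f := hcd1.differentiable one_ne_zero
  have hfc : Continuous f := hcd1.continuous
  have hf'c : Continuous (deriv f) := hcd1.continuous_deriv le_rfl
  -- Lipschitz bound on f
  have hlip : ∀ s ∈ Icc 0 L, ∀ t ∈ Icc 0 L, ‖f s - f t‖ ≤ β * |s - t| := by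
    intro s hs t ht
    have := (convex_Icc (0:ℝ) L).norm_image_sub_le_of_norm_hasDerivWithin_le
      (f' := deriv f) (fun x hx => (hfd x).hasDerivAt.hasDerivWithinAt)
      (fun x hx => hcurv x hx) ht hs
    simpa [Real.norm_eq_abs] using this
  have hinner : ∀ s ∈ Icc 0 L, ∀ t ∈ Icc 0 L,
      1 - β ^ 2 * (s - t) ^ 2 / 2 ≤ inner ℝ (f s) (f t) := by
    intro s hs t ht
    have h1 : ‖f s - f t‖ ^ 2 ≤ (β * |s - t|) ^ 2 := by
      have := hlip s hs t ht
      nlinarith [norm_nonneg (f s - f t)]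
    have h2 : ‖f s - f t‖ ^ 2 = 2 - 2 * inner ℝ (f s) (f t) := by
      rw [norm_sub_sq_real, hunit s hs, hunit t ht]; ring
    have h3 : (β * |s - t|) ^ 2 = β ^ 2 * (s - t) ^ 2 := by
      rw [mul_pow, sq_abs]
    nlinarith
  -- FTC
  have hFTC : σ L = ∫ s in (0:ℝ)..L, f s := by
    rw [integral_deriv_eq_sub (fun x _ => hσd x) (hfc.intervalIntegrable 0 L), hσ0, sub_zero]
  -- R ≤ L
  have hRL : R ≤ L := by
    rw [hR, hFTC]
    have := norm_integral_le_of_norm_le_const (a := 0) (b := L) (C := 1) (f := f)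
      (fun x hx => by
        rw [hunit x (mem_Icc_of_Ioc (by rwa [uIoc_of_le hL.le] at hx))])
    simpa [abs_of_nonneg hL.le] using this
  have hR0 : 0 ≤ R := hR ▸ norm_nonneg _
  -- inner lower bound step F: for t ∈ Icc
  have hF : ∀ t ∈ Icc (0:ℝ) L,
      L - β ^ 2 * ((L - t) ^ 3 + t ^ 3) / 6 ≤ inner ℝ (σ L) (f t) := by
    intro t ht
    have hint : (inner ℝ (σ L) (f t) : ℝ) = ∫ s in (0:ℝ)..L, inner ℝ (f s) (f t) := by
      have h := (innerSL ℝ (f t)).intervalIntegral_comp_comm (hfc.intervalIntegrable (μ := MeasureTheory.volume) 0 L)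
      simp only [innerSL_apply_apply] at h
      rw [hFTC, real_inner_comm, ← h]
      refine intervalIntegral.integral_congr fun s _ => ?_
      exact real_inner_comm _ _
    rw [hint]
    have hpoly : (∫ s in (0:ℝ)..L, (1 - β ^ 2 * (s - t) ^ 2 / 2)) =
        L - β ^ 2 * ((L - t) ^ 3 + t ^ 3) / 6 := by
      have : ∀ s ∈ uIcc (0:ℝ) L, HasDerivAt (fun s => s - β ^ 2 * (s - t) ^ 3 / 6)
          (1 - β ^ 2 * (s - t) ^ 2 / 2) s := by
        intro s _
        have h1 : HasDerivAt (fun s : ℝ => (s - t) ^ 3) (3 * (s - t) ^ 2 * 1) s :=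
          ((hasDerivAt_id s).sub_const t).pow 3
        have := (hasDerivAt_id s).sub ((h1.const_mul (β ^ 2)).div_const 6)
        convert this using 1 <;> first | rfl | ring
      rw [integral_eq_sub_of_hasDerivAt this ((Continuous.intervalIntegrable (by fun_prop)) 0 L)]
      ring
    rw [← hpoly]
    apply integral_mono_on hL.le
    · exact Continuous.intervalIntegrable (by fun_prop) 0 L
    · exact Continuous.intervalIntegrable (hfc.inner continuous_const) 0 L
    · intro s hs; exact hinner s hs t ht
  -- step G
  have hG : L ^ 2 - β ^ 2 * L ^ 4 / 12 ≤ R ^ 2 := by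
    have hRR : (R : ℝ) ^ 2 = ∫ t in (0:ℝ)..L, inner ℝ (σ L) (f t) := by
      have h := (innerSL ℝ (σ L)).intervalIntegral_comp_comm (hfc.intervalIntegrable (μ := MeasureTheory.volume) 0 L)
      simp only [innerSL_apply_apply] at h
      rw [hR, ← real_inner_self_eq_norm_sq]
      nth_rewrite 2 [hFTC]
      rw [← h]
    have hpoly : (∫ t in (0:ℝ)..L, (L - β ^ 2 * ((L - t) ^ 3 + t ^ 3) / 6)) =
        L ^ 2 - β ^ 2 * L ^ 4 / 12 := by
      have : ∀ t ∈ uIcc (0:ℝ) L, HasDerivAt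
          (fun t => L * t - β ^ 2 * (-(L - t) ^ 4 / 4 + t ^ 4 / 4) / 6)
          (L - β ^ 2 * ((L - t) ^ 3 + t ^ 3) / 6) t := by
        intro t _
        have h1 : HasDerivAt (fun t : ℝ => (L - t) ^ 4) (4 * (L - t) ^ 3 * (-1)) t :=
          (((hasDerivAt_id t).const_sub L).pow 4 : _)
        have h2 : HasDerivAt (fun t : ℝ => t ^ 4) (4 * t ^ 3 * 1) t :=
          (hasDerivAt_id t).pow 4
        have := ((hasDerivAt_id t).const_mul L).sub
          ((((h1.neg.div_const 4).add (h2.div_const 4)).const_mul (β ^ 2)).div_const 6)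
        convert this using 1 <;> first | rfl | ring
      rw [integral_eq_sub_of_hasDerivAt this ((Continuous.intervalIntegrable (by fun_prop)) 0 L)]
      ring
    rw [hRR, ← hpoly]
    apply integral_mono_on hL.le
    · exact Continuous.intervalIntegrable (by fun_prop) 0 L
    · exact Continuous.intervalIntegrable (continuous_const.inner hfc) 0 L
    · exact hF
  exact stmt_4_alg L β R hL hβ hβL hRL hR0 hG
end
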